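/- For every real number t, define F(t) = (t/2)·(γ + log(2π)) + (1/2)·arctan(2t) + (1/2)·arctan(tanh(π·t/2)) + (1/2)·∑_{k=1}^{∞} [ −t/k + arctan( t/(k + 1/2) ) ]. Then exp(2·i·F(t)) = (2π)^{(1/2 + i·t)} / ( 2·cos(π·(1/2 + i·t)/2)·Γ(1/2 + i·t) ); in particular F(t) gives, modulo π, the phase of the functional-equation ratio along the critical line. -/

import Mathlib

open Real Complex Filter Finset Topology


lemma exp_arctan_mul_I (x : ℝ) :
    Complex.exp ((Real.arctan x : ℂ) * Complex.I) =
      (1 + x * Complex.I) / (Real.sqrt (1 + x ^ 2) : ℂ) := by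
  rw [Complex.exp_mul_I, ← Complex.ofReal_cos, ← Complex.ofReal_sin,
    Real.cos_arctan, Real.sin_arctan]
  have h : Real.sqrt (1 + x ^ 2) ≠ 0 := by positivity
  push_cast
  field_simp

lemma self_sub_arctan_nonneg {x : ℝ} (hx : 0 ≤ x) : 0 ≤ x - Real.arctan x := by
  have hder : ∀ y : ℝ, HasDerivAt (fun z : ℝ => z - Real.arctan z) (1 - 1 / (1 + y ^ 2)) y :=
    fun y => (hasDerivAt_id y).sub (Real.hasDerivAt_arctan y)
  have hmono : MonotoneOn (fun z : ℝ => z - Real.arctan z) (Set.Ici 0) := by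
    apply monotoneOn_of_deriv_nonneg (convex_Ici 0) (Continuous.continuousOn (by continuity))
    · intro y hy
      exact (hder y).differentiableAt.differentiableWithinAt
    · intro y hy
      rw [(hder y).deriv]
      have h1 : (0:ℝ) < 1 + y ^ 2 := by positivity
      have : 1 / (1 + y ^ 2) ≤ 1 := by rw [div_le_one h1]; nlinarith
      linarith
  have := hmono Set.self_mem_Ici hx hx
  simpa [Real.arctan_zero] using this

lemma self_sub_arctan_le_sq {x : ℝ} (hx : 0 ≤ x) : x - Real.arctan x ≤ x ^ 2 := by
  have hder : ∀ y : ℝ, HasDerivAt (fun z : ℝ => z ^ 2 - z + Real.arctan z)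
      (2 * y - 1 + 1 / (1 + y ^ 2)) y := by
    intro y
    have h1 : HasDerivAt (fun z : ℝ => z ^ 2) (2 * y) y := by
      simpa using hasDerivAt_pow 2 y
    exact (h1.sub (hasDerivAt_id y)).add (Real.hasDerivAt_arctan y)
  have hmono : MonotoneOn (fun z : ℝ => z ^ 2 - z + Real.arctan z) (Set.Ici 0) := by
    apply monotoneOn_of_deriv_nonneg (convex_Ici 0) (Continuous.continuousOn (by continuity))
    · intro y hy
      exact (hder y).differentiableAt.differentiableWithinAt
    · intro y hy
      simp only [interior_Ici, Set.mem_Ioi] at hy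
      rw [(hder y).deriv]
      have h1 : (0:ℝ) < 1 + y ^ 2 := by positivity
      have key : 0 ≤ (2 * y - 1) * (1 + y ^ 2) + 1 := by nlinarith [sq_nonneg y, sq_nonneg (y - 1)]
      have : 2 * y - 1 + 1 / (1 + y ^ 2) = ((2 * y - 1) * (1 + y ^ 2) + 1) / (1 + y ^ 2) := by
        field_simp
      rw [this]
      positivity
  have := hmono Set.self_mem_Ici hx hx
  simp only [Real.arctan_zero] at this
  nlinarith [this]

lemma abs_self_sub_arctan_le (x : ℝ) : |x - Real.arctan x| ≤ x ^ 2 := by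
  rcases le_or_gt 0 x with hx | hx
  · rw [_root_.abs_of_nonneg (self_sub_arctan_nonneg hx)]
    exact self_sub_arctan_le_sq hx
  · have h0 : (0:ℝ) ≤ -x := by linarith
    have h1 := self_sub_arctan_nonneg h0
    have h2 := self_sub_arctan_le_sq h0
    rw [Real.arctan_neg] at h1 h2
    rw [_root_.abs_of_nonpos (by linarith)]
    nlinarith



lemma summable_phase (t : ℝ) :
    Summable (fun k : ℕ => -t / ((k : ℝ) + 1) + Real.arctan (t / ((k : ℝ) + 1 + 1 / 2))) := by
  have hbound : ∀ k : ℕ,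
      |(-t / ((k : ℝ) + 1) + Real.arctan (t / ((k : ℝ) + 1 + 1 / 2)))|
        ≤ (t ^ 2 + |t|) * (1 / ((k : ℝ) + 1) ^ 2) := by
    intro k
    set n : ℝ := (k : ℝ) + 1 with hn
    have hn1 : (1:ℝ) ≤ n := by rw [hn]; have : (0:ℝ) ≤ (k:ℝ) := Nat.cast_nonneg k; linarith
    have hnpos : (0:ℝ) < n := by linarith
    set x : ℝ := t / (n + 1 / 2) with hx
    have hsplit : -t / n + Real.arctan x = (Real.arctan x - x) + (x - t / n) := by ring
    have h1 : |Real.arctan x - x| ≤ t ^ 2 / n ^ 2 := by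
      have := abs_self_sub_arctan_le x
      rw [abs_sub_comm] at this
      refine this.trans ?_
      rw [hx, div_pow]
      apply div_le_div_of_nonneg_left (by positivity) (by positivity)
      nlinarith
    have h2 : |x - t / n| ≤ |t| / n ^ 2 := by
      have hne : n + 1/2 ≠ 0 := by positivity
      have : x - t / n = -t * (1 / 2) / (n * (n + 1 / 2)) := by
        rw [hx]; field_simp; ring
      rw [this, abs_div, abs_mul, abs_mul]
      rw [div_le_div_iff₀ (by positivity) (by positivity)]
      rw [abs_neg, abs_of_pos hnpos, abs_of_pos (show (0:ℝ) < n + 1/2 by linarith)]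
      have h4 : |(1:ℝ)/2| = 1/2 := by norm_num
      rw [h4]
      nlinarith [abs_nonneg t]
    calc |(-t / n + Real.arctan x)| ≤ |Real.arctan x - x| + |x - t / n| := by
          rw [hsplit]; exact abs_add_le _ _
      _ ≤ t ^ 2 / n ^ 2 + |t| / n ^ 2 := add_le_add h1 h2
      _ = (t ^ 2 + |t|) * (1 / n ^ 2) := by ring
  have hs : Summable (fun k : ℕ => (t ^ 2 + |t|) * (1 / ((k : ℝ) + 1) ^ 2)) := by
    apply Summable.mul_left
    have h := (Real.summable_one_div_nat_pow (p := 2)).mpr one_lt_two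
    have := (summable_nat_add_iff 1).mpr h
    refine this.congr fun k => ?_
    push_cast
    ring
  exact Summable.of_abs (hs.of_nonneg_of_le (fun k => abs_nonneg _) hbound)



-- per-term identity
lemma term_eq (t : ℝ) (k : ℕ) :
    Complex.exp ((((-t / ((k : ℝ) + 1) + Real.arctan (t / ((k : ℝ) + 1 + 1 / 2))) : ℝ) : ℂ) * Complex.I) =
      Complex.exp ((-t / ((k : ℝ) + 1) : ℝ) * Complex.I) *
        ((((k : ℂ) + 1) + (1 / 2 + Complex.I * t)) /
          ((‖(((k : ℂ) + 1) + (1 / 2 + Complex.I * t))‖ : ℝ) : ℂ)) := by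
  have hn : (0:ℝ) < (k : ℝ) + 1 + 1 / 2 := by positivity
  set m : ℝ := (k : ℝ) + 1 + 1 / 2 with hm
  set x : ℝ := t / m with hx
  have h1 : ((((-t / ((k : ℝ) + 1) + Real.arctan x) : ℝ)) : ℂ) * Complex.I
      = ((-t / ((k : ℝ) + 1) : ℝ) : ℂ) * Complex.I + ((Real.arctan x : ℝ) : ℂ) * Complex.I := by
    push_cast; ring
  rw [h1, Complex.exp_add, exp_arctan_mul_I]
  congr 1
  -- (1 + x I)/√(1+x²) = (k+1+s)/abs(k+1+s)
  have habs : ‖(((k : ℂ) + 1) + (1 / 2 + Complex.I * t))‖ = Real.sqrt (m ^ 2 + t ^ 2) := by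
    rw [Complex.norm_def, Complex.normSq_apply]
    have hre : (((k : ℂ) + 1) + (1 / 2 + Complex.I * t)).re = m := by
      simp [hm]
    have him : (((k : ℂ) + 1) + (1 / 2 + Complex.I * t)).im = t := by simp
    rw [hre, him]; ring_nf
  have hsqrt : Real.sqrt (1 + x ^ 2) * m = Real.sqrt (m ^ 2 + t ^ 2) := by
    rw [show m ^ 2 + t ^ 2 = (1 + x ^ 2) * m ^ 2 by rw [hx]; field_simp]
    rw [Real.sqrt_mul (by positivity), Real.sqrt_sq hn.le]
  have h2 : ((m:ℝ):ℂ) ≠ 0 := by exact_mod_cast hn.ne'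
  have hnum : (1 : ℂ) + (x : ℂ) * Complex.I = (((k : ℂ) + 1) + (1 / 2 + Complex.I * t)) / (m : ℂ) := by
    rw [eq_div_iff h2, hx, Complex.ofReal_div]
    have h2' : ((m:ℝ):ℂ) ≠ 0 := h2
    field_simp
    push_cast [hm]
    ring
  rw [habs, hnum, ← hsqrt, Complex.ofReal_mul, div_div]
  ring

lemma prod_formula (t : ℝ) (N : ℕ) (hN : 1 ≤ N) :
    (∏ k ∈ range N, (Complex.exp ((-t / ((k : ℝ) + 1) : ℝ) * Complex.I) *
        ((((k : ℂ) + 1) + (1 / 2 + Complex.I * t)) /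
          ((‖(((k : ℂ) + 1) + (1 / 2 + Complex.I * t))‖ : ℝ) : ℂ))))
    = Complex.exp (-(Complex.I * t) * (((harmonic N : ℝ) : ℂ) - ((Real.log N : ℝ) : ℂ))) *
      ((‖(1 / 2 + Complex.I * t)‖ : ℂ) / (1 / 2 + Complex.I * t)) *
      ((‖(Complex.GammaSeq (1 / 2 + Complex.I * t) N)‖ : ℂ) /
        Complex.GammaSeq (1 / 2 + Complex.I * t) N) := by
  set s : ℂ := 1 / 2 + Complex.I * t with hs
  have hsre : s.re = 1 / 2 := by simp [hs]
  have hs0 : s ≠ 0 := by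
    intro h; rw [h] at hsre; simp at hsre
  have hNR : (0:ℝ) < (N:ℝ) := by exact_mod_cast hN
  have hNC : ((N:ℂ)) ≠ 0 := by exact_mod_cast hNR.ne'
  set c : ℕ → ℂ := fun k => ((k : ℂ) + 1) + s with hc
  set A : ℂ := ∏ k ∈ range N, c k with hA
  have hfac : ∀ j : ℕ, s + (j:ℂ) ≠ 0 := by
    intro j h
    have h1 := congrArg Complex.re h
    have h2 : (0:ℝ) ≤ (j:ℝ) := Nat.cast_nonneg j
    simp [hsre] at h1
    linarith
  set B : ℂ := ∏ j ∈ range (N+1), (s + (j:ℂ)) with hB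
  have hBA : B = A * s := by
    rw [hB, hA, Finset.prod_range_succ']
    simp only [Nat.cast_zero, add_zero]
    congr 1
    refine Finset.prod_congr rfl fun k _ => ?_
    push_cast [hc]
    ring
  have hBne : B ≠ 0 := Finset.prod_ne_zero_iff.mpr (fun j _ => hfac j)
  set G : ℂ := Complex.GammaSeq s N with hG
  have hGdef : G = ((N:ℂ) ^ s * (Nat.factorial N : ℂ)) / B := rfl
  have hcpow : ((N:ℂ) ^ s : ℂ) ≠ 0 := by
    rw [Complex.cpow_def_of_ne_zero hNC]
    exact Complex.exp_ne_zero _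
  have hfact : ((Nat.factorial N : ℕ) : ℂ) ≠ 0 := by exact_mod_cast (Nat.factorial_pos N).ne'
  have hGne : G ≠ 0 := by
    rw [hGdef]; exact div_ne_zero (mul_ne_zero hcpow hfact) hBne
  have hAval : A * (s * G) = (N:ℂ) ^ s * (Nat.factorial N : ℂ) := by
    have h1 : A * (s * G) = B * G := by linear_combination (-G) * hBA
    rw [h1, hGdef, mul_comm, div_mul_cancel₀ _ hBne]
  -- split the product
  rw [Finset.prod_mul_distrib]
  have hexp : (∏ k ∈ range N, Complex.exp ((-t / ((k : ℝ) + 1) : ℝ) * Complex.I))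
      = Complex.exp (-(Complex.I * t) * ((harmonic N : ℝ) : ℂ)) := by
    rw [← Complex.exp_sum]
    congr 1
    rw [← Finset.sum_mul]
    have hh2 : ((harmonic N : ℚ) : ℝ) = ∑ k ∈ range N, ((k:ℝ)+1)⁻¹ := by
      rw [harmonic]; push_cast; ring
    have hh3 : ∑ k ∈ range N, (-t / ((k : ℝ) + 1)) = -t * ((harmonic N : ℚ) : ℝ) := by
      rw [hh2, Finset.mul_sum]
      exact Finset.sum_congr rfl fun k _ => by ring
    rw [← Complex.ofReal_sum, hh3]
    push_cast
    ring
  have habsprod : (∏ k ∈ range N, ((‖(c k)‖ : ℝ) : ℂ)) = ((‖A‖ : ℝ) : ℂ) := by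
    rw [hA, Complex.norm_prod, Complex.ofReal_prod]
  have hprod2 : (∏ k ∈ range N, (c k / ((‖(c k)‖ : ℝ) : ℂ)))
      = A / ((‖A‖ : ℝ) : ℂ) := by
    rw [Finset.prod_div_distrib, habsprod, hA]
  have hAne : A ≠ 0 := by
    rw [hA]
    refine Finset.prod_ne_zero_iff.mpr fun k _ => ?_
    intro h
    have h1 := congrArg Complex.re h
    rw [hc] at h1
    simp [hsre] at h1
    have h2 : (0:ℝ) ≤ (k:ℝ) := Nat.cast_nonneg k
    linarith
  have habsA : (‖A‖) * (‖s‖ * ‖G‖)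
      = (N:ℝ) ^ ((1:ℝ)/2) * (Nat.factorial N : ℝ) := by
    have h5 := congrArg norm hAval
    have hcast : ((N:ℕ):ℂ) = (((N:ℝ)):ℂ) := by push_cast; ring
    rw [norm_mul, norm_mul, norm_mul, Complex.norm_natCast, hcast,
      Complex.norm_cpow_eq_rpow_re_of_pos hNR, hsre] at h5
    exact h5
  -- exponential rewrites
  set l : ℂ := ((Real.log N : ℝ) : ℂ) with hl
  have hNcpow : (N:ℂ) ^ s = Complex.exp (l * s) := by
    rw [Complex.cpow_def_of_ne_zero hNC, hl]
    have hlog : (Complex.log ((N:ℕ):ℂ)) = ((Real.log ((N:ℕ):ℝ) : ℝ) : ℂ) := by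
      rw [← Complex.ofReal_natCast, ← Complex.ofReal_log hNR.le]
    rw [hlog]
  have hR : (((N:ℝ) ^ ((1:ℝ)/2) : ℝ) : ℂ) = Complex.exp (l * (1/2 : ℂ)) := by
    rw [Real.rpow_def_of_pos hNR, Complex.ofReal_exp, hl]
    push_cast
    ring_nf
  have habsAC : ((‖A‖ : ℝ) : ℂ) * (((‖s‖ : ℝ) : ℂ) * ((‖G‖ : ℝ) : ℂ))
      = Complex.exp (l * (1/2 : ℂ)) * (Nat.factorial N : ℂ) := by
    have h := congrArg (fun r : ℝ => (r : ℂ)) habsA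
    simp only [Complex.ofReal_mul] at h
    rw [h, hR]
    push_cast
    ring
  have hexpsplit : Complex.exp (-(Complex.I * t) * (((harmonic N : ℝ) : ℂ) - l))
      = Complex.exp (-(Complex.I * t) * ((harmonic N : ℝ) : ℂ)) *
        (Complex.exp (l * s) / Complex.exp (l * (1/2 : ℂ))) := by
    rw [← Complex.exp_sub, ← Complex.exp_add]
    congr 1
    rw [hs]
    ring
  rw [hexp, hprod2, hexpsplit]
  have h1 : ((‖A‖ : ℝ) : ℂ) ≠ 0 := by
    simpa using (norm_ne_zero_iff.mpr hAne)
  have h2 : ((‖s‖ : ℝ) : ℂ) ≠ 0 := by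
    simpa using (norm_ne_zero_iff.mpr hs0)
  have h3 : ((‖G‖ : ℝ) : ℂ) ≠ 0 := by
    simpa using (norm_ne_zero_iff.mpr hGne)
  have h4 : Complex.exp (l * (1/2 : ℂ)) ≠ 0 := Complex.exp_ne_zero _
  rw [hNcpow] at hAval
  rw [mul_assoc, mul_assoc]
  congr 1
  rw [← mul_assoc, div_mul_div_comm, div_mul_div_comm,
    div_eq_div_iff h1 (by exact mul_ne_zero (mul_ne_zero h4 hs0) hGne)]
  linear_combination Complex.exp (l * (1/2 : ℂ)) * hAval - Complex.exp (l * s) * habsAC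







lemma Gamma_crit_ne_zero (t : ℝ) : Complex.Gamma (1 / 2 + Complex.I * t) ≠ 0 := by
  apply Complex.Gamma_ne_zero
  intro m h
  have h1 := congrArg Complex.re h
  simp at h1
  have h2 : (0:ℝ) ≤ (m:ℝ) := Nat.cast_nonneg m
  linarith

lemma exp_tsum_eq (t : ℝ) :
    Complex.exp (((∑' k : ℕ, (-t / ((k : ℝ) + 1) + Real.arctan (t / ((k : ℝ) + 1 + 1 / 2)))) : ℝ) * Complex.I)
    = Complex.exp (-(Complex.I * t) * (Real.eulerMascheroniConstant : ℂ)) *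
      ((‖(1 / 2 + Complex.I * t)‖ : ℂ) / (1 / 2 + Complex.I * t)) *
      ((‖(Complex.Gamma (1 / 2 + Complex.I * t))‖ : ℂ) /
        Complex.Gamma (1 / 2 + Complex.I * t)) := by
  set s : ℂ := 1 / 2 + Complex.I * t with hs
  set g : ℕ → ℝ := fun k => -t / ((k : ℝ) + 1) + Real.arctan (t / ((k : ℝ) + 1 + 1 / 2)) with hg
  set L : ℝ := ∑' k, g k with hL
  have hsum : HasSum g L := (summable_phase t).hasSum
  have hS : Tendsto (fun N => ∑ k ∈ range N, g k) atTop (𝓝 L) := hsum.tendsto_sum_nat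
  set P : ℕ → ℂ := fun N => ∏ k ∈ range N, Complex.exp ((g k : ℂ) * Complex.I) with hP
  have hcont : Continuous (fun x : ℝ => Complex.exp ((x : ℂ) * Complex.I)) :=
    (Complex.continuous_ofReal.mul continuous_const).cexp
  have hP1 : Tendsto P atTop (𝓝 (Complex.exp ((L : ℂ) * Complex.I))) := by
    have : P = fun N => Complex.exp (((∑ k ∈ range N, g k : ℝ) : ℂ) * Complex.I) := by
      funext N
      show ∏ k ∈ range N, Complex.exp ((g k : ℂ) * Complex.I) = _
      rw [← Complex.exp_sum]
      congr 1
      rw [Complex.ofReal_sum, Finset.sum_mul]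
    rw [this]
    exact (hcont.tendsto L).comp hS
  have hGam := Complex.GammaSeq_tendsto_Gamma s
  have hGamne := Gamma_crit_ne_zero t
  have hQ : Tendsto (fun N => Complex.exp (-(Complex.I * t) * (((harmonic N : ℝ) : ℂ) - ((Real.log N : ℝ) : ℂ))) *
      ((‖s‖ : ℂ) / s) *
      ((‖(Complex.GammaSeq s N)‖ : ℂ) / Complex.GammaSeq s N)) atTop
      (𝓝 (Complex.exp (-(Complex.I * t) * (Real.eulerMascheroniConstant : ℂ)) *
        ((‖s‖ : ℂ) / s) *
        ((‖(Complex.Gamma s)‖ : ℂ) / Complex.Gamma s))) := by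
    apply Tendsto.mul
    apply Tendsto.mul
    · have h0 : Tendsto (fun N : ℕ => ((harmonic N : ℝ) - Real.log N)) atTop
          (𝓝 Real.eulerMascheroniConstant) := Real.tendsto_harmonic_sub_log
      have hcont2 : Continuous (fun x : ℝ => Complex.exp (-(Complex.I * t) * (x : ℂ))) :=
        (continuous_const.mul Complex.continuous_ofReal).cexp
      have h5 := (hcont2.tendsto _).comp h0
      refine h5.congr fun N => ?_
      show Complex.exp (-(Complex.I * t) * ((((harmonic N : ℝ) - Real.log N) : ℝ) : ℂ)) = _
      congr 1
      push_cast
      ring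
    · exact tendsto_const_nhds
    · apply Tendsto.div _ hGam hGamne
      have habs : Tendsto (fun N => ‖(Complex.GammaSeq s N)‖) atTop
          (𝓝 (‖(Complex.Gamma s)‖)) := (continuous_norm.tendsto _).comp hGam
      exact (Complex.continuous_ofReal.tendsto _).comp habs
  have hP2 : Tendsto P atTop (𝓝 (Complex.exp (-(Complex.I * t) * (Real.eulerMascheroniConstant : ℂ)) *
      ((‖s‖ : ℂ) / s) *
      ((‖(Complex.Gamma s)‖ : ℂ) / Complex.Gamma s))) := by
    apply hQ.congr'
    filter_upwards [eventually_ge_atTop 1] with N hN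
    rw [← prod_formula t N hN]
    show _ = ∏ k ∈ range N, Complex.exp ((g k : ℂ) * Complex.I)
    exact Finset.prod_congr rfl fun k _ => (term_eq t k).symm
  exact tendsto_nhds_unique hP1 hP2

lemma abs_Gamma_crit_sq (t : ℝ) :
    (‖(Complex.Gamma (1 / 2 + Complex.I * t))‖) ^ 2 * Real.cosh (Real.pi * t)
      = Real.pi := by
  set s : ℂ := 1 / 2 + Complex.I * t with hs
  have hconj : (starRingEnd ℂ) s = 1 - s := by
    apply Complex.ext <;> simp [hs] <;> norm_num
  have h1 : Complex.Gamma s * Complex.Gamma (1 - s)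
      = (Real.pi : ℂ) / Complex.sin ((Real.pi : ℂ) * s) := Complex.Gamma_mul_Gamma_one_sub s
  rw [← hconj, Complex.Gamma_conj, Complex.mul_conj] at h1
  have hsin : Complex.sin ((Real.pi : ℂ) * s) = ((Real.cosh (Real.pi * t) : ℝ) : ℂ) := by
    have harg : ((Real.pi : ℂ) * s) = ((Real.pi / 2 : ℝ) : ℂ) + ((Real.pi * t : ℝ) : ℂ) * Complex.I := by
      rw [hs]; push_cast; ring
    rw [harg, Complex.sin_add, Complex.sin_mul_I, Complex.cos_mul_I,
      ← Complex.ofReal_sin, ← Complex.ofReal_cos, Real.sin_pi_div_two, Real.cos_pi_div_two,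
      ← Complex.ofReal_cosh]
    push_cast
    ring
  rw [hsin] at h1
  have hcosh : (0:ℝ) < Real.cosh (Real.pi * t) := Real.cosh_pos _
  have h2 : (Complex.normSq (Complex.Gamma s) : ℂ) * ((Real.cosh (Real.pi * t) : ℝ) : ℂ)
      = (Real.pi : ℂ) := by
    rw [h1, div_mul_cancel₀]
    exact_mod_cast hcosh.ne'
  have h3 : (Complex.normSq (Complex.Gamma s) * Real.cosh (Real.pi * t) : ℝ) = Real.pi := by
    exact_mod_cast h2
  rw [← Complex.sq_norm] at h3
  exact h3
noncomputable def phaseF (t : ℝ) : ℝ :=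
  t / 2 * (Real.eulerMascheroniConstant + Real.log (2 * Real.pi)) +
    1 / 2 * Real.arctan (2 * t) +
    1 / 2 * Real.arctan (Real.tanh (Real.pi * t / 2)) +
    1 / 2 * ∑' k : ℕ, (-t / ((k : ℝ) + 1) + Real.arctan (t / ((k : ℝ) + 1 + 1 / 2)))

set_option maxHeartbeats 3000000 in
theorem exp_phase_eq_functional_ratio (t : ℝ) :
    Complex.exp (2 * Complex.I * (phaseF t : ℂ)) =
      (2 * (Real.pi : ℂ)) ^ ((1 / 2 + Complex.I * t : ℂ)) /
        (2 * Complex.cos (Real.pi * (1 / 2 + Complex.I * t) / 2) *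
          Complex.Gamma (1 / 2 + Complex.I * t)) := by
  set s : ℂ := 1 / 2 + Complex.I * t with hs
  set τ : ℝ := Real.tanh (Real.pi * t / 2) with hτdef
  set ch : ℝ := Real.cosh (Real.pi * t / 2) with hchdef
  set sh : ℝ := Real.sinh (Real.pi * t / 2) with hshdef
  set C : ℝ := Real.cosh (Real.pi * t) with hCdef
  set γ : ℝ := Real.eulerMascheroniConstant with hγdef
  set L : ℝ := ∑' k : ℕ, (-t / ((k : ℝ) + 1) + Real.arctan (t / ((k : ℝ) + 1 + 1 / 2))) with hLdef
  set aΓ : ℝ := ‖(Complex.Gamma s)‖ with haΓdef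
  set c : ℂ := Complex.cos ((Real.pi : ℂ) * (1 / 2 + Complex.I * t) / 2) with hcdef
  have hΓne : Complex.Gamma s ≠ 0 := Gamma_crit_ne_zero t
  have hch0 : (0:ℝ) < ch := Real.cosh_pos _
  have hC0 : (0:ℝ) < C := Real.cosh_pos _
  have hτ : τ = sh / ch := Real.tanh_eq_sinh_div_cosh _
  have hC : ch ^ 2 + sh ^ 2 = C := by
    rw [hCdef, show Real.pi * t = 2 * (Real.pi * t / 2) by ring, Real.cosh_two_mul]
  -- split the exponential
  have h2IF : 2 * Complex.I * ((phaseF t : ℝ) : ℂ) =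
      ((t * (γ + Real.log (2 * Real.pi)) : ℝ) : ℂ) * Complex.I +
      (((Real.arctan (2 * t) : ℝ) : ℂ) * Complex.I +
      (((Real.arctan τ : ℝ) : ℂ) * Complex.I +
      ((L : ℝ) : ℂ) * Complex.I)) := by
    rw [phaseF, ← hLdef, ← hγdef, ← hτdef]
    push_cast [-Complex.ofReal_arctan]
    ring
  rw [h2IF, Complex.exp_add, Complex.exp_add, Complex.exp_add]
  rw [show ((L : ℝ) : ℂ) * Complex.I =
    ((∑' k : ℕ, (-t / ((k : ℝ) + 1) + Real.arctan (t / ((k : ℝ) + 1 + 1 / 2))) : ℝ) : ℂ) * Complex.I from rfl]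
  rw [exp_tsum_eq t]
  -- rewrite arctan exponentials
  have has : ‖s‖ = Real.sqrt (1 / 4 + t ^ 2) := by
    rw [Complex.norm_def, Complex.normSq_apply]
    have h1 : s.re = 1 / 2 := by simp [hs]
    have h2 : s.im = t := by simp [hs]
    rw [h1, h2]
    congr 1
    ring
  have has0 : (0:ℝ) < ‖s‖ := by
    rw [has]; positivity
  have hE2 : Complex.exp (((Real.arctan (2 * t) : ℝ) : ℂ) * Complex.I)
      = s / ((‖s‖ : ℝ) : ℂ) := by
    rw [exp_arctan_mul_I, has]
    have hsq : Real.sqrt (1 + (2*t) ^ 2) = 2 * Real.sqrt (1/4 + t^2) := by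
      rw [show (1 + (2*t)^2 : ℝ) = 2^2 * (1/4 + t^2) by ring,
        Real.sqrt_mul (by positivity), Real.sqrt_sq (by norm_num)]
    rw [hsq]
    have hnum : (1 : ℂ) + ((2*t : ℝ) : ℂ) * Complex.I = 2 * s := by
      rw [hs]; push_cast; ring
    rw [hnum]
    have hr : ((Real.sqrt (1/4 + t^2) : ℝ) : ℂ) ≠ 0 := by
      have : (0:ℝ) < Real.sqrt (1/4+t^2) := by positivity
      exact_mod_cast this.ne'
    push_cast
    rw [mul_div_mul_left _ _ (two_ne_zero)]
  rw [hE2, exp_arctan_mul_I]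
  -- Gamma modulus fact
  have habsΓ : aΓ ^ 2 * C = Real.pi := abs_Gamma_crit_sq t
  -- the real square-root identity
  have hreal : aΓ * C = Real.sqrt Real.pi * Real.sqrt C := by
    have h6 : (aΓ * C) ^ 2 = Real.pi * C := by
      rw [mul_pow]
      linear_combination C * habsΓ
    have h7 : (Real.sqrt Real.pi * Real.sqrt C) ^ 2 = Real.pi * C := by
      rw [mul_pow, Real.sq_sqrt Real.pi_pos.le, Real.sq_sqrt hC0.le]
    have h8 : (0:ℝ) ≤ aΓ * C := by positivity
    have h9 : (0:ℝ) ≤ Real.sqrt Real.pi * Real.sqrt C := by positivity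
    nlinarith [h6, h7, h8, h9, sq_nonneg (aΓ * C - Real.sqrt Real.pi * Real.sqrt C), sq_nonneg (aΓ * C + Real.sqrt Real.pi * Real.sqrt C)]
  -- sqrt(1+τ²)
  have hsq1 : Real.sqrt (1 + τ ^ 2) = Real.sqrt C / ch := by
    have h5 : 1 + τ ^ 2 = C / ch ^ 2 := by
      rw [hτ]
      field_simp
      linear_combination hC
    rw [h5, Real.sqrt_div hC0.le, Real.sqrt_sq hch0.le]
  -- cos value
  have hcval : c = ((Real.sqrt 2 / 2 * ch : ℝ) : ℂ) - ((Real.sqrt 2 / 2 * sh : ℝ) : ℂ) * Complex.I := by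
    have harg : ((Real.pi : ℂ) * (1 / 2 + Complex.I * t) / 2)
        = ((Real.pi / 4 : ℝ) : ℂ) + ((Real.pi * t / 2 : ℝ) : ℂ) * Complex.I := by
      push_cast; ring
    rw [hcdef, harg, Complex.cos_add, Complex.sin_mul_I, Complex.cos_mul_I,
      ← Complex.ofReal_cos, ← Complex.ofReal_sin, Real.cos_pi_div_four, Real.sin_pi_div_four,
      ← Complex.ofReal_cosh, ← Complex.ofReal_sinh]
    push_cast [-Complex.ofReal_cosh, -Complex.ofReal_sinh]
    ring
  have hcne : c ≠ 0 := by
    intro h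
    rw [hcval] at h
    have h1 := congrArg Complex.re h
    simp at h1
    exact hch0.ne' h1
  -- cpow value
  have h2π0 : (0:ℝ) < 2 * Real.pi := by positivity
  have hcpow : (2 * (Real.pi : ℂ)) ^ ((1 / 2 + Complex.I * t : ℂ))
      = ((Real.sqrt (2 * Real.pi) : ℝ) : ℂ) *
        Complex.exp (Complex.I * t * ((Real.log (2 * Real.pi) : ℝ) : ℂ)) := by
    have hb : (2 * (Real.pi : ℂ)) = (((2 * Real.pi : ℝ)) : ℂ) := by push_cast; ring
    have hbne : (((2 * Real.pi : ℝ)) : ℂ) ≠ 0 := by exact_mod_cast h2π0.ne'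
    rw [hb, Complex.cpow_def_of_ne_zero hbne, ← Complex.ofReal_log h2π0.le]
    have hsqrt : ((Real.sqrt (2 * Real.pi) : ℝ) : ℂ)
        = Complex.exp (((Real.log (2 * Real.pi) / 2 : ℝ) : ℂ)) := by
      rw [← Complex.ofReal_exp]
      congr 1
      rw [Real.sqrt_eq_rpow, Real.rpow_def_of_pos h2π0]
      congr 1
      ring
    rw [hsqrt, ← Complex.exp_add]
    congr 1
    push_cast
    ring
  -- the key complex identity
  have hCc : ((ch : ℝ) : ℂ) ^ 2 + ((sh : ℝ) : ℂ) ^ 2 = ((C : ℝ) : ℂ) := by exact_mod_cast hC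
  have hrealc : ((aΓ : ℝ) : ℂ) * ((C : ℝ) : ℂ)
      = ((Real.sqrt Real.pi : ℝ) : ℂ) * ((Real.sqrt C : ℝ) : ℂ) := by exact_mod_cast hreal
  have hchne : ((ch : ℝ) : ℂ) ≠ 0 := by exact_mod_cast hch0.ne'
  have key2 : ((1:ℂ) + ((τ:ℝ):ℂ) * Complex.I) * ((aΓ:ℝ):ℂ) * (2 * c)
      = ((Real.sqrt (2*Real.pi) : ℝ):ℂ) * ((Real.sqrt (1 + τ^2) : ℝ):ℂ) := by
    rw [hcval, hsq1, hτ]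
    push_cast [-Complex.ofReal_cosh, -Complex.ofReal_sinh]
    field_simp
    have hsp : ((Real.sqrt (2*Real.pi) : ℝ) : ℂ) = ((Real.sqrt 2 : ℝ) : ℂ) * ((Real.sqrt Real.pi : ℝ) : ℂ) := by
      rw [← Complex.ofReal_mul, ← Real.sqrt_mul (by norm_num : (0:ℝ) ≤ 2)]
    linear_combination (((Real.sqrt 2 : ℝ):ℂ) * ((aΓ:ℝ):ℂ)) * hCc + ((Real.sqrt 2 : ℝ):ℂ) * hrealc - ((Real.sqrt C : ℝ):ℂ) * hsp
      - (((Real.sqrt 2 : ℝ):ℂ) * ((aΓ:ℝ):ℂ) * ((sh:ℝ):ℂ)^2) * Complex.I_sq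
  -- final assembly
  have hexpγ : Complex.exp (((t * (γ + Real.log (2 * Real.pi)) : ℝ) : ℂ) * Complex.I) *
      Complex.exp (-(Complex.I * t) * ((γ : ℝ) : ℂ))
      = Complex.exp (Complex.I * t * ((Real.log (2 * Real.pi) : ℝ) : ℂ)) := by
    rw [← Complex.exp_add]
    congr 1
    push_cast
    ring
  have hsqτ0 : (0:ℝ) < Real.sqrt (1 + τ ^ 2) := by positivity
  have hsqτne : ((Real.sqrt (1 + τ ^ 2) : ℝ) : ℂ) ≠ 0 := by exact_mod_cast hsqτ0.ne'
  have hs0 : s ≠ 0 := by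
    intro h
    have := congrArg Complex.re h
    simp [hs] at this
  have hasne : ((‖s‖ : ℝ) : ℂ) ≠ 0 := by exact_mod_cast has0.ne'
  have haΓne : ((aΓ : ℝ) : ℂ) ≠ 0 := by
    have : (0:ℝ) < aΓ := by
      rw [haΓdef]
      exact (norm_pos_iff.mpr hΓne)
    exact_mod_cast this.ne'
  rw [hcpow, ← hs, ← hγdef, ← haΓdef]
  clear_value s τ ch sh C γ L aΓ c
  rw [eq_div_iff (mul_ne_zero (mul_ne_zero two_ne_zero hcne) hΓne)]
  field_simp
  have hsplit : ((Real.sqrt (2*Real.pi) : ℝ) : ℂ) = ((Real.sqrt 2 : ℝ) : ℂ) * ((Real.sqrt Real.pi : ℝ) : ℂ) := by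
    rw [← Complex.ofReal_mul, ← Real.sqrt_mul (by norm_num : (0:ℝ) ≤ 2)]
  have key2' : ((1:ℂ) + ((τ:ℝ):ℂ) * Complex.I) * ((aΓ:ℝ):ℂ) * (2 * c)
      = ((Real.sqrt 2 : ℝ):ℂ) * ((Real.sqrt Real.pi : ℝ):ℂ) * ((Real.sqrt (1 + τ^2) : ℝ):ℂ) := by
    rw [key2, hsplit]
  have hexpg : Complex.exp ((t:ℂ) * (((γ:ℝ):ℂ) + ((Real.log (2*Real.pi) : ℝ):ℂ)) * Complex.I) *
      Complex.exp (-(Complex.I * (t:ℂ) * ((γ:ℝ):ℂ)))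
      = Complex.exp (Complex.I * (t:ℂ) * ((Real.log (2*Real.pi) : ℝ):ℂ)) := by
    rw [← Complex.exp_add]
    congr 1
    ring
  rw [Complex.ofReal_mul, Complex.ofReal_add]
  linear_combination (((1:ℂ) + ((τ:ℝ):ℂ) * Complex.I) * ((aΓ:ℝ):ℂ) * 2 * c) * hexpg
    + (Complex.exp (Complex.I * (t:ℂ) * ((Real.log (2*Real.pi) : ℝ):ℂ))) * key2'
    - (Complex.exp (Complex.I * (t:ℂ) * ((Real.log (2*Real.pi) : ℝ):ℂ)) * ((Real.sqrt (1 + τ^2) : ℝ):ℂ)) * hsplit
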